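/- Let τ, h₁, h₂ > 0 and let Uⁿ, Vⁿ, Rⁿ : ℤ × ℤ → ℝ (n ∈ ℕ) be sequences of grid functions. Fix n ≥ 1 and suppose that for all (j₁,j₂) ∈ ℤ² the LI-LEP scheme equations hold: (Uⁿ⁺¹(j₁,j₂) − Uⁿ(j₁,j₂))/τ = (Vⁿ⁺¹(j₁,j₂) + Vⁿ(j₁,j₂))/2; (Vⁿ⁺¹(j₁,j₂) − Vⁿ(j₁,j₂))/τ = (δ_x²((Uⁿ⁺¹+Uⁿ)/2))(j₁,j₂) + (δ_y²((Uⁿ⁺¹+Uⁿ)/2))(j₁,j₂) − b((3Uⁿ(j₁,j₂) − Uⁿ⁻¹(j₁,j₂))/2)·(Rⁿ⁺¹(j₁,j₂) + Rⁿ(j₁,j₂))/2; (Rⁿ⁺¹(j₁,j₂) − Rⁿ(j₁,j₂))/τ = (1/2)·b((3Uⁿ(j₁,j₂) − Uⁿ⁻¹(j₁,j₂))/2)·(Vⁿ⁺¹(j₁,j₂) + Vⁿ(j₁,j₂))/2. Define the discrete energy density Dⁿ(j₁,j₂) = (1/2)Vⁿ(j₁,j₂)² + (1/2)((δ_xUⁿ)(j₁,j₂))²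 + (1/2)((δ_yUⁿ)(j₁,j₂))² + Rⁿ(j₁,j₂)², and the fluxes Fⁿ(j₁,j₂) = ((δ_x((Uⁿ⁺¹+Uⁿ)/2))(j₁−1,j₂))·((Vⁿ⁺¹(j₁,j₂)+Vⁿ(j₁,j₂))/2) and Gⁿ(j₁,j₂) = ((δ_y((Uⁿ⁺¹+Uⁿ)/2))(j₁,j₂−1))·((Vⁿ⁺¹(j₁,j₂)+Vⁿ(j₁,j₂))/2). Then for all (j₁,j₂) ∈ ℤ²: (Dⁿ⁺¹(j₁,j₂) − Dⁿ(j₁,j₂))/τ − (δ_xFⁿ)(j₁,j₂) − (δ_yGⁿ)(j₁,j₂) = 0. -/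

import Mathlib

/-- The function `b(x) = sin x / √(2 - cos x)`. -/
noncomputable def b (x : ℝ) : ℝ := Real.sin x / Real.sqrt (2 - Real.cos x)

/-- Forward difference in the first index, with mesh size `h₁`. -/
noncomputable def dx (h₁ : ℝ) (W : ℤ × ℤ → ℝ) : ℤ × ℤ → ℝ :=
  fun j => (W (j.1 + 1, j.2) - W (j.1, j.2)) / h₁

/-- Forward difference in the second index, with mesh size `h₂`. -/
noncomputable def dy (h₂ : ℝ) (W : ℤ × ℤ → ℝ) : ℤ × ℤ → ℝ :=
  fun j => (W (j.1, j.2 + 1) - W (j.1, j.2)) / h₂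

/-- Second central difference in the first index, with mesh size `h₁`. -/
noncomputable def dxx (h₁ : ℝ) (W : ℤ × ℤ → ℝ) : ℤ × ℤ → ℝ :=
  fun j => (W (j.1 + 1, j.2) - 2 * W (j.1, j.2) + W (j.1 - 1, j.2)) / h₁ ^ 2

/-- Second central difference in the second index, with mesh size `h₂`. -/
noncomputable def dyy (h₂ : ℝ) (W : ℤ × ℤ → ℝ) : ℤ × ℤ → ℝ :=
  fun j => (W (j.1, j.2 + 1) - 2 * W (j.1, j.2) + W (j.1, j.2 - 1)) / h₂ ^ 2

theorem LI_LEP_discrete_local_energy_conservation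
    (τ h₁ h₂ : ℝ) (hτ : 0 < τ) (hh₁ : 0 < h₁) (hh₂ : 0 < h₂)
    (U V R : ℕ → ℤ × ℤ → ℝ)
    (n : ℕ) (hn : 1 ≤ n)
    (scheme1 : ∀ j : ℤ × ℤ,
      (U (n+1) j - U n j) / τ = (V (n+1) j + V n j) / 2)
    (scheme2 : ∀ j : ℤ × ℤ,
      (V (n+1) j - V n j) / τ =
        dxx h₁ (fun k => (U (n+1) k + U n k) / 2) j
        + dyy h₂ (fun k => (U (n+1) k + U n k) / 2) j
        - b ((3 * U n j - U (n-1) j) / 2) * (R (n+1) j + R n j) / 2)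
    (scheme3 : ∀ j : ℤ × ℤ,
      (R (n+1) j - R n j) / τ =
        (1/2) * b ((3 * U n j - U (n-1) j) / 2) * (V (n+1) j + V n j) / 2)
    (D : ℕ → ℤ × ℤ → ℝ)
    (hD : ∀ (m : ℕ) (j : ℤ × ℤ), D m j =
      (1/2) * (V m j)^2 + (1/2) * (dx h₁ (U m) j)^2
        + (1/2) * (dy h₂ (U m) j)^2 + (R m j)^2)
    (F G : ℤ × ℤ → ℝ)
    (hF : ∀ j : ℤ × ℤ, F j =
      dx h₁ (fun k => (U (n+1) k + U n k) / 2) (j.1 - 1, j.2)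
        * ((V (n+1) j + V n j) / 2))
    (hG : ∀ j : ℤ × ℤ, G j =
      dy h₂ (fun k => (U (n+1) k + U n k) / 2) (j.1, j.2 - 1)
        * ((V (n+1) j + V n j) / 2)) :
    ∀ j : ℤ × ℤ,
      (D (n+1) j - D n j) / τ - dx h₁ F j - dy h₂ G j = 0 := by
  intro j
  obtain ⟨p, q⟩ := j
  have e1j := scheme1 (p, q)
  have e1x := scheme1 (p + 1, q)
  have e1y := scheme1 (p, q + 1)
  have e2 := scheme2 (p, q)
  have e3 := scheme3 (p, q)
  rw [div_eq_iff hτ.ne'] at e1j e1x e1y e2 e3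
  have key : D (n+1) (p, q) - D n (p, q) =
      τ * (dx h₁ F (p, q) + dy h₂ G (p, q)) := by
    simp only [hD, hF, hG, dx, dy, dxx, dyy, Int.sub_add_cancel, Int.add_sub_cancel] at *
    linear_combination
      ((V (n+1) (p, q) + V n (p, q)) / 2) * e2
      + (R (n+1) (p, q) + R n (p, q)) * e3
      + ((U (n+1) (p+1, q) + U n (p+1, q) - U (n+1) (p, q) - U n (p, q)) / (2 * h₁ ^ 2))
          * (e1x - e1j)
      + ((U (n+1) (p, q+1) + U n (p, q+1) - U (n+1) (p, q) - U n (p, q)) / (2 * h₂ ^ 2))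
          * (e1y - e1j)
  rw [key]
  field_simp
  ring
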